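/- arXiv:2308.13043 — 4 statements merged into one kernel-verified Lean document; each statement's English description precedes it below -/
import Mathlib

section
/- Let p be a prime and let k, e, b, a be positive integers, and set w = p^k. Let G be a finite group acting on a finite set V with |V| = w^(e·b), and suppose there is a point v₀ ∈ V fixed by every element of G and that |G| divides k·a·e²·(w − 1). Then the number of orbits of G on V is at least ⌈(w^e − 1)/(log₂(w)·a·e²·(w − 1))⌉ + 1. -/
open MulAction in
lemma card_le_of_fixed_point (G V : Type*) [Group G] [Finite G] [Finite V] [MulAction G V]
    (v₀ : V) (hfix : ∀ g : G, g • v₀ = v₀) :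
    Nat.card V ≤ 1 + (Nat.card (orbitRel.Quotient G V) - 1) * Nat.card G := by
  classical
  have : Fintype V := Fintype.ofFinite V
  have : Fintype G := Fintype.ofFinite G
  have : Fintype (orbitRel.Quotient G V) := Fintype.ofFinite _
  set Q := orbitRel.Quotient G V
  have hcard : Nat.card V = ∑ ω : Q, Nat.card ω.orbit := by
    rw [Nat.card_congr (selfEquivSigmaOrbits' G V)]
    rw [Nat.card_eq_fintype_card, Fintype.card_sigma]
    simp [Nat.card_eq_fintype_card]
    congr!
  set ω₀ : Q := Quotient.mk'' v₀ with hω₀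
  have horb₀ : ω₀.orbit = ({v₀} : Set V) := by
    rw [hω₀, orbitRel.Quotient.orbit_mk]
    apply Set.eq_singleton_iff_unique_mem.mpr
    exact ⟨MulAction.mem_orbit_self v₀, fun y hy => by
      obtain ⟨g, rfl⟩ := hy; exact hfix g⟩
  have hcard₀ : Nat.card ω₀.orbit = 1 := by rw [horb₀]; simp
  have hle : ∀ ω : Q, Nat.card ω.orbit ≤ Nat.card G := by
    intro ω
    have := orbitRel.Quotient.orbit_eq_orbit_out ω Quotient.out_eq'
    rw [this]
    have hdvd : Nat.card (orbit G ω.out) ∣ Nat.card G := by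
      simp only [Nat.card_eq_fintype_card]
      exact Dvd.intro _ (card_orbit_mul_card_stabilizer_eq_card_group G ω.out)
    exact Nat.le_of_dvd Nat.card_pos hdvd
  rw [hcard, ← Finset.sum_erase_add _ _ (Finset.mem_univ ω₀), hcard₀]
  rw [add_comm]
  gcongr
  calc ∑ ω ∈ Finset.univ.erase ω₀, Nat.card ω.orbit
      ≤ ∑ _ω ∈ Finset.univ.erase ω₀, Nat.card G := Finset.sum_le_sum fun ω _ => hle ω
    _ = (Nat.card Q - 1) * Nat.card G := by
        simp [Finset.sum_const, Finset.card_erase_of_mem (Finset.mem_univ _),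
          Finset.card_univ, Nat.card_eq_fintype_card]

/-- Proposition 2.3: with `w = p^k`, if `|V| = w^(e·b)`, some point `v₀ ∈ V` is fixed by
every element of `G`, and `|G|` divides `k·a·e²·(w - 1)`, then the number of orbits of
`G` on `V` is at least `⌈(w^e - 1)/(log₂(w)·a·e²·(w - 1))⌉ + 1`. -/
theorem rank_lower_bound_log (p k e b a : ℕ) (hp : p.Prime) (hk : 0 < k) (he : 0 < e)
    (hb : 0 < b) (ha : 0 < a) (G V : Type*) [Group G] [Finite G] [Finite V] [MulAction G V]
    (hV : Nat.card V = (p ^ k) ^ (e * b))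
    (v₀ : V) (hfix : ∀ g : G, g • v₀ = v₀)
    (hdvd : Nat.card G ∣ k * a * e ^ 2 * (p ^ k - 1)) :
    (⌈(((p : ℝ) ^ k) ^ e - 1) /
        (Real.logb 2 ((p : ℝ) ^ k) * (a : ℝ) * (e : ℝ) ^ 2 * ((p : ℝ) ^ k - 1))⌉ + 1 : ℤ) ≤
      Nat.card (MulAction.orbitRel.Quotient G V) := by
  have hp2 : 2 ≤ p := hp.two_le
  set w : ℕ := p ^ k with hw
  have hw2 : 2 ≤ w := le_trans hp2 (Nat.le_self_pow hk.ne' p)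
  set D : ℕ := k * a * e ^ 2 * (w - 1) with hD
  have hDpos : 0 < D := by
    have : 0 < w - 1 := by omega
    positivity
  have hGle : Nat.card G ≤ D := Nat.le_of_dvd hDpos hdvd
  set N : ℕ := Nat.card (MulAction.orbitRel.Quotient G V) with hN
  have hNpos : 0 < N := by
    have : Nonempty (MulAction.orbitRel.Quotient G V) := ⟨Quotient.mk'' v₀⟩
    exact Nat.card_pos
  -- counting bound
  have hcount : Nat.card V ≤ 1 + (N - 1) * Nat.card G := card_le_of_fixed_point G V v₀ hfix
  have hwd : w ^ e ≤ w ^ (e * b) :=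
    Nat.pow_le_pow_right (by omega) (Nat.le_mul_of_pos_right e hb)
  have hkey : w ^ e - 1 ≤ (N - 1) * D := by
    have h1 : w ^ (e * b) ≤ 1 + (N - 1) * D := by
      calc w ^ (e * b) = Nat.card V := hV.symm
        _ ≤ 1 + (N - 1) * Nat.card G := hcount
        _ ≤ 1 + (N - 1) * D := by gcongr
    omega
  -- real estimates
  have hwR : ((w : ℝ)) = (p : ℝ) ^ k := by push_cast [hw]; ring
  have hlogb : (k : ℝ) ≤ Real.logb 2 ((p : ℝ) ^ k) := by
    rw [Real.logb_pow]
    have h1 : (1 : ℝ) ≤ Real.logb 2 p := by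
      rw [show (1:ℝ) = Real.logb 2 2 by simp]
      exact Real.logb_le_logb_of_le one_lt_two (by norm_num) (by exact_mod_cast hp2)
    calc (k : ℝ) = k * 1 := by ring
      _ ≤ k * Real.logb 2 p := by
          apply mul_le_mul_of_nonneg_left h1 (by positivity)
  have hwm1 : (0 : ℝ) < (p : ℝ) ^ k - 1 := by
    rw [← hwR]
    have : (2 : ℝ) ≤ w := by exact_mod_cast hw2
    linarith
  set R : ℝ := Real.logb 2 ((p : ℝ) ^ k) * (a : ℝ) * (e : ℝ) ^ 2 * ((p : ℝ) ^ k - 1) with hR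
  have hDR : (D : ℝ) ≤ R := by
    rw [hR, hD]
    have haR : (1 : ℝ) ≤ a := by exact_mod_cast ha
    have heR : (1 : ℝ) ≤ e := by exact_mod_cast he
    have hcast : ((k * a * e ^ 2 * (w - 1) : ℕ) : ℝ)
        = (k : ℝ) * a * e ^ 2 * ((p : ℝ) ^ k - 1) := by
      push_cast [Nat.cast_sub (by omega : 1 ≤ w)]
      rw [hwR]
    rw [hcast]
    have h0 : (0:ℝ) ≤ (k : ℝ) * a * e ^ 2 := by positivity
    have h1 : (k : ℝ) * a * e ^ 2 ≤ Real.logb 2 ((p : ℝ) ^ k) * a * e ^ 2 :=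
      mul_le_mul_of_nonneg_right (mul_le_mul_of_nonneg_right hlogb (by positivity))
        (by positivity)
    exact mul_le_mul_of_nonneg_right h1 hwm1.le
  have hRpos : (0 : ℝ) < R := lt_of_lt_of_le (by exact_mod_cast hDpos) hDR
  have hnum : ((p : ℝ) ^ k) ^ e - 1 = ((w ^ e - 1 : ℕ) : ℝ) := by
    push_cast [Nat.cast_sub (Nat.one_le_pow _ _ (by omega) : 1 ≤ w ^ e)]
    rw [hwR]
  have hfrac : (((p : ℝ) ^ k) ^ e - 1) / R ≤ ((N : ℝ) - 1) := by
    rw [div_le_iff₀ hRpos, hnum]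
    calc ((w ^ e - 1 : ℕ) : ℝ) ≤ ((N - 1) * D : ℕ) := by exact_mod_cast hkey
      _ = ((N - 1 : ℕ) : ℝ) * D := by push_cast; ring
      _ ≤ ((N : ℝ) - 1) * R := by
          have heq : ((N - 1 : ℕ) : ℝ) = (N : ℝ) - 1 := by
            rw [Nat.cast_sub hNpos]; norm_num
          rw [heq]
          have hN1 : (0 : ℝ) ≤ (N : ℝ) - 1 := by
            have : (1 : ℝ) ≤ N := by exact_mod_cast hNpos
            linarith
          exact mul_le_mul_of_nonneg_left hDR hN1
  have hceil : (⌈(((p : ℝ) ^ k) ^ e - 1) / R⌉ : ℤ) ≤ (N : ℤ) - 1 := by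
    apply Int.ceil_le.mpr
    push_cast
    exact hfrac
  omega
end

section
/- Let α = log₉(96·3^(1/3)) and λ = 2·3^(1/3). Let p be a prime and let k, e, b, a be positive integers with a ≤ e^(2α)/λ, and set w = p^k. Let G be a finite group acting on a finite set V with |V| = w^(e·b), and suppose there is a point v₀ ∈ V fixed by every element of G and that |G| divides k·a·e²·(w − 1). Then the number of orbits of G on V is at least ⌈λ·(w^e − 1)/(log₂(w)·e^(2α+2)·(w − 1))⌉ + 1. -/
/-- Equation (2.4): with `α = log₉(96·3^(1/3))`, `λ = 2·3^(1/3)` and `w = p^k`, if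
`a ≤ e^(2α)/λ`, `|V| = w^(e·b)`, some point `v₀ ∈ V` is fixed by every element of `G`,
and `|G|` divides `k·a·e²·(w - 1)`, then the number of orbits of `G` on `V` is at least
`⌈λ·(w^e - 1)/(log₂(w)·e^(2α+2)·(w - 1))⌉ + 1`. -/
theorem rank_lower_bound_alpha_lambda (p k e b a : ℕ) (hp : p.Prime) (hk : 0 < k)
    (he : 0 < e) (hb : 0 < b) (ha : 0 < a)
    (hAF : (a : ℝ) ≤ (e : ℝ) ^ (2 * Real.logb 9 (96 * (3 : ℝ) ^ ((1 : ℝ) / 3))) /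
      (2 * (3 : ℝ) ^ ((1 : ℝ) / 3)))
    (G V : Type*) [Group G] [Finite G] [Finite V] [MulAction G V]
    (hV : Nat.card V = (p ^ k) ^ (e * b))
    (v₀ : V) (hfix : ∀ g : G, g • v₀ = v₀)
    (hdvd : Nat.card G ∣ k * a * e ^ 2 * (p ^ k - 1)) :
    (⌈(2 * (3 : ℝ) ^ ((1 : ℝ) / 3)) * (((p : ℝ) ^ k) ^ e - 1) /
        (Real.logb 2 ((p : ℝ) ^ k) *
          (e : ℝ) ^ (2 * Real.logb 9 (96 * (3 : ℝ) ^ ((1 : ℝ) / 3)) + 2) *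
          ((p : ℝ) ^ k - 1))⌉ + 1 : ℤ) ≤
      Nat.card (MulAction.orbitRel.Quotient G V) := by
  classical
  set α : ℝ := Real.logb 9 (96 * (3 : ℝ) ^ ((1 : ℝ) / 3)) with hα
  set lam : ℝ := 2 * (3 : ℝ) ^ ((1 : ℝ) / 3) with hlam
  have hlampos : 0 < lam := by
    have := Real.rpow_pos_of_pos (by norm_num : (0:ℝ) < 3) ((1:ℝ)/3)
    positivity
  -- basic facts about w = p^k
  have hp2 : 2 ≤ p := hp.two_le
  have hw2 : 2 ≤ p ^ k := by
    calc 2 = 2 ^ 1 := rfl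
    _ ≤ p ^ k := Nat.pow_le_pow_left hp2 1 |>.trans (Nat.pow_le_pow_right (by omega) hk)
  -- combinatorial part
  set Ω := MulAction.orbitRel.Quotient G V with hΩ
  have : Finite Ω := Quotient.finite _
  have fV : Fintype V := Fintype.ofFinite V
  have fG : Fintype G := Fintype.ofFinite G
  have fΩ : Fintype Ω := Fintype.ofFinite Ω
  have hcardV : Nat.card V = ∑ ω : Ω, Nat.card (ω.orbit) := by
    rw [Nat.card_congr (MulAction.selfEquivSigmaOrbits' G V)]
    rw [Nat.card_sigma]
  set ω₀ : Ω := Quotient.mk'' v₀ with hω₀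
  have horb₀ : (ω₀ : Ω).orbit = {v₀} := by
    rw [hω₀, MulAction.orbitRel.Quotient.orbit_mk]
    ext x
    simp only [MulAction.mem_orbit_iff, Set.mem_singleton_iff]
    constructor
    · rintro ⟨g, rfl⟩; exact hfix g
    · rintro rfl; exact ⟨1, one_smul _ _⟩
  have hcard₀ : Nat.card (ω₀ : Ω).orbit = 1 := by rw [horb₀]; simp
  have horble : ∀ ω : Ω, Nat.card ω.orbit ≤ Nat.card G := by
    intro ω
    induction ω using Quotient.inductionOn' with
    | h v =>
      rw [MulAction.orbitRel.Quotient.orbit_mk]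
      exact Finite.card_range_le _
  set N := Nat.card Ω with hN
  have hN1 : 1 ≤ N := Nat.one_le_iff_ne_zero.mpr (Nat.card_ne_zero.mpr ⟨⟨ω₀⟩, ‹Finite Ω›⟩)
  have hkey : Nat.card V ≤ 1 + (N - 1) * Nat.card G := by
    rw [hcardV, ← Finset.add_sum_erase _ _ (Finset.mem_univ ω₀), hcard₀]
    gcongr
    calc ∑ ω ∈ Finset.univ.erase ω₀, Nat.card ω.orbit
        ≤ (Finset.univ.erase ω₀).card * Nat.card G := by
          apply Finset.sum_le_card_nsmul
          intro x _; exact horble x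
    _ = (N - 1) * Nat.card G := by
          rw [Finset.card_erase_of_mem (Finset.mem_univ _), Finset.card_univ, hN,
            Nat.card_eq_fintype_card, Nat.card_eq_fintype_card]
  -- arithmetic part
  have hGpos : 0 < Nat.card G := Nat.card_pos
  have hGle : Nat.card G ≤ k * a * e ^ 2 * (p ^ k - 1) := by
    have h1 : 0 < p ^ k - 1 := by omega
    exact Nat.le_of_dvd (Nat.mul_pos (Nat.mul_pos (Nat.mul_pos hk ha) (pow_pos he 2)) h1) hdvd
  -- real part
  have heR : (0:ℝ) < e := by exact_mod_cast he
  have hW1 : (1:ℝ) < (p:ℝ) ^ k := by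
    have h1 : (1:ℕ) < p ^ k := by omega
    exact_mod_cast h1
  have hD : (0:ℝ) < (p:ℝ) ^ k - 1 := by linarith
  have hEpos : (0:ℝ) < (e:ℝ) ^ (2*α) := Real.rpow_pos_of_pos heR _
  have hkR : (0:ℝ) < k := by exact_mod_cast hk
  have haR : (0:ℝ) < a := by exact_mod_cast ha
  have hL : (k:ℝ) ≤ Real.logb 2 ((p:ℝ) ^ k) := by
    rw [Real.logb_pow]
    have h2 : (1:ℝ) ≤ Real.logb 2 p := by
      have := Real.logb_le_logb_of_le (by norm_num : (1:ℝ) < 2)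
        (by norm_num : (0:ℝ) < 2) (show (2:ℝ) ≤ (p:ℝ) by exact_mod_cast hp2)
      rwa [Real.logb_self_eq_one (by norm_num)] at this
    nlinarith [hkR, h2]
  have hE : (e:ℝ) ^ (2*α+2) = (e:ℝ) ^ (2*α) * (e:ℝ) ^ (2:ℕ) := by
    rw [Real.rpow_add heR, ← Real.rpow_natCast (e:ℝ) 2]
    norm_num
  have halam : lam * a ≤ (e:ℝ) ^ (2*α) := by
    rw [mul_comm]
    exact (le_div_iff₀ hlampos).mp hAF
  have hGleR : (Nat.card G : ℝ) ≤ (k:ℝ) * a * (e:ℝ) ^ (2:ℕ) * ((p:ℝ) ^ k - 1) := by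
    have := (Nat.cast_le (α := ℝ)).mpr hGle
    push_cast [Nat.cast_sub (show 1 ≤ p ^ k by omega)] at this ⊢
    linarith
  have hGposR : (0:ℝ) < Nat.card G := by exact_mod_cast hGpos
  have hkeyR : ((p:ℝ) ^ k) ^ (e*b) - 1 ≤ ((N:ℝ) - 1) * Nat.card G := by
    have := (Nat.cast_le (α := ℝ)).mpr hkey
    rw [hV] at this
    push_cast [Nat.cast_sub hN1] at this ⊢
    linarith
  have hnum0 : (0:ℝ) ≤ ((p:ℝ) ^ k) ^ e - 1 := by
    have : (1:ℝ) ≤ ((p:ℝ) ^ k) ^ e := one_le_pow₀ hW1.le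
    linarith
  have hfinal : lam * (((p:ℝ) ^ k) ^ e - 1) /
      (Real.logb 2 ((p:ℝ) ^ k) * (e:ℝ) ^ (2*α+2) * ((p:ℝ) ^ k - 1)) ≤ (N:ℝ) - 1 := by
    have hdenle : lam * ((k:ℝ) * a * (e:ℝ) ^ (2:ℕ) * ((p:ℝ) ^ k - 1)) ≤
        Real.logb 2 ((p:ℝ) ^ k) * (e:ℝ) ^ (2*α+2) * ((p:ℝ) ^ k - 1) := by
      rw [hE]
      have h1 : lam * ((k:ℝ) * a * (e:ℝ) ^ (2:ℕ) * ((p:ℝ) ^ k - 1))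
          = (k:ℝ) * ((lam * a) * ((e:ℝ) ^ (2:ℕ) * ((p:ℝ) ^ k - 1))) := by ring
      have h2 : Real.logb 2 ((p:ℝ) ^ k) * ((e:ℝ) ^ (2*α) * (e:ℝ) ^ (2:ℕ)) * ((p:ℝ) ^ k - 1)
          = Real.logb 2 ((p:ℝ) ^ k) * ((e:ℝ) ^ (2*α) * ((e:ℝ) ^ (2:ℕ) * ((p:ℝ) ^ k - 1))) := by
        ring
      rw [h1, h2]
      have hm : (0:ℝ) ≤ (e:ℝ) ^ (2:ℕ) * ((p:ℝ) ^ k - 1) := by positivity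
      exact mul_le_mul hL (mul_le_mul_of_nonneg_right halam hm)
        (by positivity) (by linarith)
    have hdpos : (0:ℝ) < (k:ℝ) * a * (e:ℝ) ^ (2:ℕ) * ((p:ℝ) ^ k - 1) := by positivity
    calc lam * (((p:ℝ) ^ k) ^ e - 1) /
        (Real.logb 2 ((p:ℝ) ^ k) * (e:ℝ) ^ (2*α+2) * ((p:ℝ) ^ k - 1))
        ≤ lam * (((p:ℝ) ^ k) ^ e - 1) /
          (lam * ((k:ℝ) * a * (e:ℝ) ^ (2:ℕ) * ((p:ℝ) ^ k - 1))) := by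
          gcongr
      _ = (((p:ℝ) ^ k) ^ e - 1) / ((k:ℝ) * a * (e:ℝ) ^ (2:ℕ) * ((p:ℝ) ^ k - 1)) :=
          mul_div_mul_left _ _ (ne_of_gt hlampos)
      _ ≤ (((p:ℝ) ^ k) ^ (e*b) - 1) / (Nat.card G : ℝ) := by
          apply div_le_div₀ _ _ hGposR hGleR
          · have : (1:ℝ) ≤ ((p:ℝ) ^ k) ^ (e*b) := one_le_pow₀ hW1.le
            linarith
          · have : ((p:ℝ) ^ k) ^ e ≤ ((p:ℝ) ^ k) ^ (e*b) :=
              pow_le_pow_right₀ hW1.le (Nat.le_mul_of_pos_right e hb)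
            linarith
      _ ≤ (N:ℝ) - 1 := by
          rw [div_le_iff₀ hGposR]
          linarith
  have hceil : (⌈lam * (((p:ℝ) ^ k) ^ e - 1) /
      (Real.logb 2 ((p:ℝ) ^ k) * (e:ℝ) ^ (2*α+2) * ((p:ℝ) ^ k - 1))⌉ : ℤ) ≤ (N:ℤ) - 1 := by
    apply Int.ceil_le.mpr
    push_cast
    exact hfinal
  omega
end

section
/- Let α = log₉(96·3^(1/3)) and λ = 2·3^(1/3). Let e ≥ 2 be an integer and let rad(e) denote the product of the distinct prime divisors of e. Let w be a prime power such that rad(e) divides w − 1. If λ·(w^e − 1) ≤ 5·log₂(w)·e^(2α+2)·(w − 1), then e ∈ {2, 3, 4, 5, 6, 7, 8, 9, 16}. -/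
/-- `(e+1)^7 ≤ 3·e^7` for `e ≥ 8`. -/
private lemma pow7_step (e : ℕ) (he : 8 ≤ e) : (e + 1) ^ 7 ≤ 3 * e ^ 7 := by
  have h1 : (8 * (e + 1)) ^ 7 ≤ (9 * e) ^ 7 := Nat.pow_le_pow_left (by omega) 7
  have h2 : 8 ^ 7 * (e + 1) ^ 7 ≤ 9 ^ 7 * e ^ 7 := by
    calc 8 ^ 7 * (e + 1) ^ 7 = (8 * (e + 1)) ^ 7 := (mul_pow ..).symm
    _ ≤ (9 * e) ^ 7 := h1
    _ = 9 ^ 7 * e ^ 7 := mul_pow ..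
  have h3 : 9 ^ 7 * e ^ 7 ≤ 8 ^ 7 * (3 * e ^ 7) := by
    have : (9:ℕ) ^ 7 ≤ 8 ^ 7 * 3 := by norm_num
    calc 9 ^ 7 * e ^ 7 ≤ 8 ^ 7 * 3 * e ^ 7 := Nat.mul_le_mul_right _ this
    _ = 8 ^ 7 * (3 * e ^ 7) := by ring
  exact Nat.le_of_mul_le_mul_left (h2.trans h3) (by norm_num)

private lemma L3 (k : ℕ) (hk : 30 ≤ k) : 5 * (k + 2) ^ 7 < 2 * 3 ^ k := by
  induction k, hk using Nat.le_induction with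
  | base => norm_num
  | succ n hn ih =>
    have h1 : (n + 3) ^ 7 ≤ 3 * (n + 2) ^ 7 := pow7_step (n + 2) (by omega)
    calc 5 * (n + 1 + 2) ^ 7 = 5 * (n + 3) ^ 7 := by ring_nf
    _ ≤ 5 * (3 * (n + 2) ^ 7) := Nat.mul_le_mul_left _ h1
    _ = 3 * (5 * (n + 2) ^ 7) := by ring
    _ < 3 * (2 * 3 ^ n) := by omega
    _ = 2 * 3 ^ (n + 1) := by ring

private lemma L4 (k : ℕ) (hk : 15 ≤ k) : 5 * (k + 2) ^ 7 < 2 * 4 ^ k := by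
  induction k, hk using Nat.le_induction with
  | base => norm_num
  | succ n hn ih =>
    have h1 : (n + 3) ^ 7 ≤ 3 * (n + 2) ^ 7 := pow7_step (n + 2) (by omega)
    calc 5 * (n + 1 + 2) ^ 7 = 5 * (n + 3) ^ 7 := by ring_nf
    _ ≤ 5 * (3 * (n + 2) ^ 7) := Nat.mul_le_mul_left _ h1
    _ = 3 * (5 * (n + 2) ^ 7) := by ring
    _ < 3 * (2 * 4 ^ n) := by omega
    _ ≤ 2 * 4 ^ (n + 1) := by
        have : (3:ℕ) * (2 * 4 ^ n) ≤ 4 * (2 * 4 ^ n) := by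
          have h4 : (0:ℕ) < 4 ^ n := Nat.pow_pos (by norm_num)
          nlinarith
        calc (3:ℕ) * (2 * 4 ^ n) ≤ 4 * (2 * 4 ^ n) := this
        _ = 2 * 4 ^ (n + 1) := by ring

set_option maxHeartbeats 1000000 in
/-- The analytic key lemma: the displayed inequality is incompatible with
`5·e^7 < 2·w^(e-2)`. -/
private lemma key (e w : ℕ) (he : 2 ≤ e) (hw2 : 2 ≤ w)
    (hineq : (2 * (3 : ℝ) ^ ((1 : ℝ) / 3)) * ((w : ℝ) ^ e - 1) ≤
      5 * Real.logb 2 (w : ℝ) *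
        (e : ℝ) ^ (2 * Real.logb 9 (96 * (3 : ℝ) ^ ((1 : ℝ) / 3)) + 2) * ((w : ℝ) - 1))
    (hbig : 5 * e ^ 7 < 2 * w ^ (e - 2)) : False := by
  obtain ⟨n, rfl⟩ : ∃ n, e = n + 2 := ⟨e - 2, by omega⟩
  have hbigN : 5 * (n + 2) ^ 7 < 2 * w ^ n := by simpa using hbig
  set x : ℝ := (w : ℝ) with hxdef
  have hx : (2:ℝ) ≤ x := by rw [hxdef]; exact_mod_cast hw2
  have hx0 : (0:ℝ) < x := by linarith
  -- cube root estimates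
  have hcr1 : (1:ℝ) ≤ (3:ℝ) ^ ((1:ℝ)/3) := by
    have := Real.rpow_le_rpow (by norm_num : (0:ℝ) ≤ 1) (by norm_num : (1:ℝ) ≤ 3)
      (by norm_num : (0:ℝ) ≤ 1/3)
    simpa using this
  have hcr2 : (3:ℝ) ^ ((1:ℝ)/3) ≤ 2 := by
    have h8 : ((8:ℝ)) ^ ((1:ℝ)/3) = 2 := by
      rw [show (8:ℝ) = 2 ^ (3:ℕ) by norm_num, ← Real.rpow_natCast 2 3,
        ← Real.rpow_mul (by norm_num : (0:ℝ) ≤ 2)]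
      norm_num
    calc (3:ℝ) ^ ((1:ℝ)/3) ≤ (8:ℝ) ^ ((1:ℝ)/3) :=
          Real.rpow_le_rpow (by norm_num) (by norm_num) (by norm_num)
    _ = 2 := h8
  -- exponent bound : 2α + 2 ≤ 7
  have hαb : 2 * Real.logb 9 (96 * (3:ℝ) ^ ((1:ℝ)/3)) + 2 ≤ 7 := by
    have hX : (0:ℝ) < 96 * (3:ℝ) ^ ((1:ℝ)/3) := by positivity
    have hmain : Real.logb 9 (96 * (3:ℝ) ^ ((1:ℝ)/3)) ≤ 5/2 := by
      rw [Real.logb_le_iff_le_rpow (by norm_num) hX]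
      have h9 : (9:ℝ) ^ ((5:ℝ)/2) = 243 := by
        rw [show (9:ℝ) = 3 ^ (2:ℕ) by norm_num, ← Real.rpow_natCast 3 2,
          ← Real.rpow_mul (by norm_num : (0:ℝ) ≤ 3)]
        norm_num
      rw [h9]; nlinarith
    linarith
  -- power comparison : e^(2α+2) ≤ e^7
  have hE1 : (1:ℝ) ≤ ((n + 2 : ℕ) : ℝ) := by exact_mod_cast (by omega : 1 ≤ n + 2)
  have hP : ((n + 2 : ℕ) : ℝ) ^ (2 * Real.logb 9 (96 * (3:ℝ) ^ ((1:ℝ)/3)) + 2)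
      ≤ ((n + 2 : ℕ) : ℝ) ^ (7:ℕ) := by
    calc ((n + 2 : ℕ) : ℝ) ^ (2 * Real.logb 9 (96 * (3:ℝ) ^ ((1:ℝ)/3)) + 2)
        ≤ ((n + 2 : ℕ) : ℝ) ^ (7:ℝ) := Real.rpow_le_rpow_of_exponent_le hE1 hαb
    _ = ((n + 2 : ℕ) : ℝ) ^ (7:ℕ) := by
        rw [show (7:ℝ) = ((7:ℕ):ℝ) by norm_num, Real.rpow_natCast]
  have hP0 : (0:ℝ) ≤ ((n + 2 : ℕ) : ℝ) ^ (2 * Real.logb 9 (96 * (3:ℝ) ^ ((1:ℝ)/3)) + 2) :=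
    Real.rpow_nonneg (by positivity) _
  -- logarithm bound : log₂ x ≤ x - 1
  have hl2 : (0.6931471803:ℝ) < Real.log 2 := Real.log_two_gt_d9
  have hlogb : Real.logb 2 x ≤ x - 1 := by
    have h1 : Real.log (x/2) ≤ x/2 - 1 := Real.log_le_sub_one_of_pos (by linarith)
    have h2 : Real.log (x/2) = Real.log x - Real.log 2 := Real.log_div (by linarith) (by norm_num)
    rw [Real.logb, div_le_iff₀ (by linarith : (0:ℝ) < Real.log 2)]
    nlinarith [mul_nonneg (by linarith : (0:ℝ) ≤ x - 2) (by linarith : (0:ℝ) ≤ Real.log 2 - 1/2)]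
  have hlogb0 : (0:ℝ) ≤ Real.logb 2 x := Real.logb_nonneg (by norm_num) (by linarith)
  -- cast the numeric inequality
  have hbigR : 5 * ((n + 2 : ℕ) : ℝ) ^ (7:ℕ) < 2 * x ^ n := by
    rw [hxdef]; exact_mod_cast hbigN
  -- powers of x
  have hxn0 : (0:ℝ) < x ^ n := by positivity
  have hxn1 : (1:ℝ) ≤ x ^ n := one_le_pow₀ (by linarith)
  have hA0 : (0:ℝ) ≤ x - 1 := by linarith
  have hA1 : (1:ℝ) ≤ x - 1 := by linarith
  have hxe : x ^ (n + 2) = x ^ n * x * x := by ring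
  -- chain of inequalities
  have c1 : 2 * (x ^ n * x * (x - 1)) ≤ (2 * (3:ℝ) ^ ((1:ℝ)/3)) * (x ^ (n + 2) - 1) := by
    have hsub : x ^ n * x * (x - 1) ≤ x ^ (n + 2) - 1 := by nlinarith
    have hnn : (0:ℝ) ≤ x ^ n * x * (x - 1) := by
      exact mul_nonneg (mul_nonneg hxn0.le (by linarith)) hA0
    exact mul_le_mul (by linarith) hsub hnn (by linarith)
  have c2 : 5 * Real.logb 2 x *
      ((n + 2 : ℕ) : ℝ) ^ (2 * Real.logb 9 (96 * (3:ℝ) ^ ((1:ℝ)/3)) + 2) * (x - 1)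
      ≤ 5 * ((x - 1) * ((n + 2 : ℕ) : ℝ) ^ (7:ℕ)) * (x - 1) := by
    have hmul : Real.logb 2 x *
        ((n + 2 : ℕ) : ℝ) ^ (2 * Real.logb 9 (96 * (3:ℝ) ^ ((1:ℝ)/3)) + 2)
        ≤ (x - 1) * ((n + 2 : ℕ) : ℝ) ^ (7:ℕ) := mul_le_mul hlogb hP hP0 hA0
    linarith [mul_le_mul_of_nonneg_right hmul hA0]
  have c3 : 5 * ((x - 1) * ((n + 2 : ℕ) : ℝ) ^ (7:ℕ)) * (x - 1)
      < 2 * (x ^ n * x * (x - 1)) := by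
    have hpos : (0:ℝ) < (x - 1) * (x - 1) := by nlinarith
    have h1 := mul_lt_mul_of_pos_right hbigR hpos
    have h2 : (0:ℝ) ≤ x ^ n * (x - 1) := mul_nonneg hxn0.le hA0
    nlinarith [h1, h2]
  linarith [hineq, c1, c2, c3]

/-- Proposition 2.7: with `α = log₉(96·3^(1/3))` and `λ = 2·3^(1/3)`, if `e ≥ 2`,
`w` is a prime power with `rad(e) ∣ w - 1`, and
`λ·(w^e - 1) ≤ 5·log₂(w)·e^(2α+2)·(w - 1)`, then `e ∈ {2,3,4,5,6,7,8,9,16}`. -/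
theorem e_values (e : ℕ) (he : 2 ≤ e) (w : ℕ) (hw : IsPrimePow w)
    (hrad : (∏ p ∈ e.primeFactors, p) ∣ w - 1)
    (hineq : (2 * (3 : ℝ) ^ ((1 : ℝ) / 3)) * ((w : ℝ) ^ e - 1) ≤
      5 * Real.logb 2 (w : ℝ) *
        (e : ℝ) ^ (2 * Real.logb 9 (96 * (3 : ℝ) ^ ((1 : ℝ) / 3)) + 2) * ((w : ℝ) - 1)) :
    e ∈ ({2, 3, 4, 5, 6, 7, 8, 9, 16} : Finset ℕ) := by
  have hw2 : 2 ≤ w := hw.two_le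
  have hwm : 0 < w - 1 := by omega
  have hle : (∏ p ∈ e.primeFactors, p) ≤ w - 1 := Nat.le_of_dvd hwm hrad
  rcases le_or_gt e 16 with h16 | h17
  · -- small cases
    interval_cases e
    · decide
    · decide
    · decide
    · decide
    · decide
    · decide
    · decide
    · decide
    · -- e = 10
      exfalso
      have hpf : Nat.primeFactors 10 = {2, 5} := by
        rw [Nat.primeFactors,
          show Nat.primeFactorsList 10 = [2, 5] by norm_num [Nat.primeFactorsList]]
        rfl
      rw [hpf, show (∏ p ∈ ({2, 5} : Finset ℕ), p) = 10 from by decide] at hle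
      have hwlb : 11 ≤ w := by omega
      refine key 10 w (by norm_num) hw2 hineq ?_
      show 5 * 10 ^ 7 < 2 * w ^ 8
      have h := Nat.pow_le_pow_left hwlb 8
      have : 5 * 10 ^ 7 < 2 * 11 ^ 8 := by norm_num
      omega
    · -- e = 11
      exfalso
      have hpf : Nat.primeFactors 11 = {11} := by
        rw [Nat.primeFactors,
          show Nat.primeFactorsList 11 = [11] by norm_num [Nat.primeFactorsList]]
        rfl
      rw [hpf, show (∏ p ∈ ({11} : Finset ℕ), p) = 11 from by decide] at hle
      have hwlb : 12 ≤ w := by omega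
      refine key 11 w (by norm_num) hw2 hineq ?_
      show 5 * 11 ^ 7 < 2 * w ^ 9
      have h := Nat.pow_le_pow_left hwlb 9
      have : 5 * 11 ^ 7 < 2 * 12 ^ 9 := by norm_num
      omega
    · -- e = 12
      exfalso
      have hpf : Nat.primeFactors 12 = {2, 3} := by
        rw [Nat.primeFactors,
          show Nat.primeFactorsList 12 = [2, 2, 3] by norm_num [Nat.primeFactorsList]]
        rfl
      rw [hpf, show (∏ p ∈ ({2, 3} : Finset ℕ), p) = 6 from by decide] at hle
      have hwlb : 7 ≤ w := by omega
      refine key 12 w (by norm_num) hw2 hineq ?_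
      show 5 * 12 ^ 7 < 2 * w ^ 10
      have h := Nat.pow_le_pow_left hwlb 10
      have : 5 * 12 ^ 7 < 2 * 7 ^ 10 := by norm_num
      omega
    · -- e = 13
      exfalso
      have hpf : Nat.primeFactors 13 = {13} := by
        rw [Nat.primeFactors,
          show Nat.primeFactorsList 13 = [13] by norm_num [Nat.primeFactorsList]]
        rfl
      rw [hpf, show (∏ p ∈ ({13} : Finset ℕ), p) = 13 from by decide] at hle
      have hwlb : 14 ≤ w := by omega
      refine key 13 w (by norm_num) hw2 hineq ?_
      show 5 * 13 ^ 7 < 2 * w ^ 11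
      have h := Nat.pow_le_pow_left hwlb 11
      have : 5 * 13 ^ 7 < 2 * 14 ^ 11 := by norm_num
      omega
    · -- e = 14
      exfalso
      have hpf : Nat.primeFactors 14 = {2, 7} := by
        rw [Nat.primeFactors,
          show Nat.primeFactorsList 14 = [2, 7] by norm_num [Nat.primeFactorsList]]
        rfl
      rw [hpf, show (∏ p ∈ ({2, 7} : Finset ℕ), p) = 14 from by decide] at hle
      have hwlb : 15 ≤ w := by omega
      refine key 14 w (by norm_num) hw2 hineq ?_
      show 5 * 14 ^ 7 < 2 * w ^ 12
      have h := Nat.pow_le_pow_left hwlb 12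
      have : 5 * 14 ^ 7 < 2 * 15 ^ 12 := by norm_num
      omega
    · -- e = 15
      exfalso
      have hpf : Nat.primeFactors 15 = {3, 5} := by
        rw [Nat.primeFactors,
          show Nat.primeFactorsList 15 = [3, 5] by norm_num [Nat.primeFactorsList]]
        rfl
      rw [hpf, show (∏ p ∈ ({3, 5} : Finset ℕ), p) = 15 from by decide] at hle
      have hwlb : 16 ≤ w := by omega
      refine key 15 w (by norm_num) hw2 hineq ?_
      show 5 * 15 ^ 7 < 2 * w ^ 13
      have h := Nat.pow_le_pow_left hwlb 13
      have : 5 * 15 ^ 7 < 2 * 16 ^ 13 := by norm_num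
      omega
    · decide
  · -- e ≥ 17
    exfalso
    have hp := Nat.minFac_prime (show e ≠ 1 by omega)
    have hmem : e.minFac ∈ e.primeFactors :=
      Nat.mem_primeFactors.mpr ⟨hp, Nat.minFac_dvd e, by omega⟩
    have hdvd : e.minFac ∣ ∏ p ∈ e.primeFactors, p := Finset.dvd_prod_of_mem _ hmem
    have hpos : 0 < ∏ p ∈ e.primeFactors, p :=
      Finset.prod_pos fun p hp => (Nat.prime_of_mem_primeFactors hp).pos
    have hr2 : 2 ≤ ∏ p ∈ e.primeFactors, p :=
      le_trans hp.two_le (Nat.le_of_dvd hpos hdvd)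
    by_cases hr : (∏ p ∈ e.primeFactors, p) = 2
    · -- e is a power of 2, hence e ≥ 32; and w ≥ 3
      have huniq : ∀ {q : ℕ}, q.Prime → q ∣ e → q = 2 := by
        intro q hq hqe
        have hqm : q ∈ e.primeFactors := Nat.mem_primeFactors.mpr ⟨hq, hqe, by omega⟩
        have : q ∣ 2 := hr ▸ Finset.dvd_prod_of_mem _ hqm
        exact (Nat.prime_dvd_prime_iff_eq hq Nat.prime_two).mp this
      have hepow := Nat.eq_prime_pow_of_unique_prime_dvd (show e ≠ 0 by omega) huniq
      set k := e.primeFactorsList.length with hk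
      have hk5 : 5 ≤ k := by
        by_contra h
        push_neg at h
        have h1 : (2:ℕ) ^ k ≤ 2 ^ 4 := Nat.pow_le_pow_right (by norm_num) (by omega)
        omega
      have he32 : 32 ≤ e := by
        have h1 : (2:ℕ) ^ 5 ≤ 2 ^ k := Nat.pow_le_pow_right (by norm_num) hk5
        omega
      have hw3 : 3 ≤ w := by omega
      refine key e w (by omega) hw2 hineq ?_
      have h3 := L3 (e - 2) (by omega)
      rw [show e - 2 + 2 = e by omega] at h3
      have h := Nat.pow_le_pow_left hw3 (e - 2)
      omega
    · -- rad(e) ≥ 3, hence w ≥ 4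
      have hw4 : 4 ≤ w := by omega
      refine key e w (by omega) hw2 hineq ?_
      have h4 := L4 (e - 2) (by omega)
      rw [show e - 2 + 2 = e by omega] at h4
      have h := Nat.pow_le_pow_left hw4 (e - 2)
      omega
end

section
/- Let α = log₉(96·3^(1/3)) and λ = 2·3^(1/3). For every integer e ≥ 19 and every real number w ≥ 3, one has λ·(w^e − 1) > 5·log₂(w)·e^(2α+2)·(w − 1). -/
open Real

-- cube root lower bound
lemma cbrt3_lb : (1.4422 : ℝ) ≤ (3:ℝ) ^ ((1:ℝ)/3) := by
  have h : ((1.4422:ℝ) ^ (3:ℕ)) ≤ 3 := by norm_num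
  calc (1.4422:ℝ) = (((1.4422:ℝ) ^ (3:ℕ)) ^ ((1:ℝ)/3)) := by
        rw [← Real.rpow_natCast (1.4422:ℝ) 3, ← Real.rpow_mul (by norm_num)]
        norm_num
    _ ≤ (3:ℝ) ^ ((1:ℝ)/3) := Real.rpow_le_rpow (by positivity) h (by norm_num)

lemma rpow_19 : ((19:ℝ)) ^ ((13:ℝ)/2) ≤ 205070000 := by
  have h1 : ((19:ℝ)) ^ ((13:ℝ)/2) = Real.sqrt ((19:ℝ) ^ (13:ℕ)) := by
    rw [Real.sqrt_eq_rpow, ← Real.rpow_natCast (19:ℝ) 13, ← Real.rpow_mul (by norm_num)]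
    norm_num
  rw [h1]
  have : ((19:ℝ) ^ (13:ℕ)) ≤ (205070000:ℝ)^2 := by norm_num
  calc Real.sqrt ((19:ℝ) ^ (13:ℕ)) ≤ Real.sqrt ((205070000:ℝ)^2) := Real.sqrt_le_sqrt this
    _ = 205070000 := by rw [Real.sqrt_sq (by norm_num)]

-- discrete lemma
lemma disc : ∀ e : ℕ, 19 ≤ e →
    (317/120 : ℝ) * (e:ℝ) ^ ((13:ℝ)/2) < 2 * (3:ℝ) ^ ((1:ℝ)/3) * 121 * 3 ^ (e - 6) := by
  intro e he
  induction e, he using Nat.le_induction with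
  | base =>
    have h1 := rpow_19
    have h2 := cbrt3_lb
    have : ((19:ℕ):ℝ) = (19:ℝ) := by norm_num
    rw [this]
    norm_num
    nlinarith [h1, h2]
  | succ e he ih =>
    have he1 : (1:ℝ) ≤ (e:ℝ) := by
      have h : (1:ℕ) ≤ e := by omega
      exact_mod_cast h
    have he19 : (19:ℝ) ≤ (e:ℝ) := by exact_mod_cast he
    have hcast : ((e+1:ℕ):ℝ) = (e:ℝ) + 1 := by push_cast; ring
    have hsub : (e + 1) - 6 = (e - 6) + 1 := by omega
    have hstep : ((e:ℝ)+1) ^ ((13:ℝ)/2) ≤ 3 * (e:ℝ) ^ ((13:ℝ)/2) := by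
      have hb : (e:ℝ) + 1 ≤ (20/19) * (e:ℝ) := by linarith
      have h2 : ((e:ℝ)+1) ^ ((13:ℝ)/2) ≤ ((20/19) * (e:ℝ)) ^ ((13:ℝ)/2) :=
        Real.rpow_le_rpow (by positivity) hb (by norm_num)
      have h3 : ((20/19) * (e:ℝ)) ^ ((13:ℝ)/2)
          = (20/19:ℝ) ^ ((13:ℝ)/2) * (e:ℝ) ^ ((13:ℝ)/2) :=
        Real.mul_rpow (by norm_num) (by positivity)
      have h4 : (20/19:ℝ) ^ ((13:ℝ)/2) ≤ (20/19:ℝ) ^ ((7:ℕ):ℝ) :=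
        Real.rpow_le_rpow_of_exponent_le (by norm_num) (by norm_num)
      have h5 : (20/19:ℝ) ^ ((7:ℕ):ℝ) = (20/19:ℝ) ^ (7:ℕ) := Real.rpow_natCast _ 7
      have h6 : (20/19:ℝ) ^ (7:ℕ) ≤ 3 := by norm_num
      have h7 : (0:ℝ) ≤ (e:ℝ) ^ ((13:ℝ)/2) := by positivity
      nlinarith [h2, h3, h4, h7]
    rw [hcast, hsub, pow_succ]
    nlinarith [hstep, ih, pow_pos (show (0:ℝ) < 3 by norm_num) (e-6)]

-- exponent bound
lemma exp_bound : 2 * Real.logb 9 (96 * (3:ℝ) ^ ((1:ℝ)/3)) + 2 ≤ 13/2 := by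
  have h3 : (0:ℝ) < Real.log 3 := Real.log_pos (by norm_num)
  have hlog9 : Real.log 9 = 2 * Real.log 3 := by
    rw [show (9:ℝ) = 3^2 by norm_num, Real.log_pow]; push_cast; ring
  have hlogx : Real.log (96 * (3:ℝ) ^ ((1:ℝ)/3)) = Real.log 96 + (1/3) * Real.log 3 := by
    rw [Real.log_mul (by norm_num) (by positivity), Real.log_rpow (by norm_num)]
  have hlog96 : Real.log 96 ≤ (25/6) * Real.log 3 := by
    have h : ((96:ℝ) ^ (6:ℕ)) ≤ (3:ℝ) ^ (25:ℕ) := by norm_num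
    have := Real.log_le_log (by positivity) h
    rw [Real.log_pow, Real.log_pow] at this
    push_cast at this
    linarith
  rw [Real.logb, hlog9, hlogx]
  have key : (Real.log 96 + 1/3 * Real.log 3) / (2 * Real.log 3) ≤ 9/4 := by
    rw [div_le_iff₀ (by linarith)]
    nlinarith [hlog96]
  linarith

-- log bound : logb 2 w ≤ (317/600) w for w ≥ 3
lemma logb_bound (w : ℝ) (hw : 3 ≤ w) : Real.logb 2 w ≤ (317/600) * w := by
  have h2 : (0:ℝ) < Real.log 2 := Real.log_pos (by norm_num)
  have hlog2 : (200:ℝ)/317 ≤ Real.log 2 := by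
    nlinarith [Real.log_two_gt_d9]
  have hlog3 : Real.log 3 ≤ (317/200) * Real.log 2 := by
    have h : ((3:ℝ) ^ (200:ℕ)) ≤ (2:ℝ) ^ (317:ℕ) := by
      rw [show (317:ℕ) = 200 + 117 from rfl, pow_add]; norm_num
    have := Real.log_le_log (by positivity) h
    rw [Real.log_pow, Real.log_pow] at this
    push_cast at this
    linarith
  have hw3 : Real.log (w/3) ≤ w/3 - 1 := by
    have := Real.log_le_sub_one_of_pos (show (0:ℝ) < w/3 by linarith)
    linarith
  have hsplit : Real.log w = Real.log 3 + Real.log (w/3) := by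
    rw [← Real.log_mul (by norm_num) (by positivity)]
    congr 1; field_simp
  rw [Real.logb, div_le_iff₀ h2]
  rw [hsplit]
  nlinarith [hw3, hlog3, hlog2, hw]

set_option maxHeartbeats 1000000 in
/-- Inequality from the proof of Proposition 2.7: with `α = log₉(96·3^(1/3))` and
`λ = 2·3^(1/3)`, for every integer `e ≥ 19` and real `w ≥ 3`,
`λ·(w^e - 1) > 5·log₂(w)·e^(2α+2)·(w - 1)`. -/
theorem e_at_least_19_ruled_out (e : ℕ) (he : 19 ≤ e) (w : ℝ) (hw : 3 ≤ w) :
    (2 * (3 : ℝ) ^ ((1 : ℝ) / 3)) * (w ^ e - 1) >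
      5 * Real.logb 2 w *
        (e : ℝ) ^ (2 * Real.logb 9 (96 * (3 : ℝ) ^ ((1 : ℝ) / 3)) + 2) * (w - 1) := by
  have hlam : (0:ℝ) < 2 * (3:ℝ) ^ ((1:ℝ)/3) := by positivity
  have he1 : (1:ℝ) ≤ (e:ℝ) := by
    have h : (1:ℕ) ≤ e := by omega
    exact_mod_cast h
  have hlogbw : 0 ≤ Real.logb 2 w := Real.logb_nonneg (by norm_num) (by linarith)
  -- bound exponent
  have hec : (e:ℝ) ^ (2 * Real.logb 9 (96 * (3:ℝ) ^ ((1:ℝ)/3)) + 2) ≤ (e:ℝ) ^ ((13:ℝ)/2) :=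
    Real.rpow_le_rpow_of_exponent_le he1 exp_bound
  have hec0 : (0:ℝ) ≤ (e:ℝ) ^ (2 * Real.logb 9 (96 * (3:ℝ) ^ ((1:ℝ)/3)) + 2) := by positivity
  have hlb := logb_bound w hw
  have hd := disc e he
  -- step 1: RHS ≤ (317/120) e^{13/2} * (w*(w-1))
  have hw1 : (0:ℝ) ≤ w - 1 := by linarith
  have step1 : 5 * Real.logb 2 w *
        (e : ℝ) ^ (2 * Real.logb 9 (96 * (3:ℝ) ^ ((1:ℝ)/3)) + 2) * (w - 1)
      ≤ (317/120) * (e:ℝ) ^ ((13:ℝ)/2) * (w * (w-1)) := by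
    have h1 : 5 * Real.logb 2 w *
        (e : ℝ) ^ (2 * Real.logb 9 (96 * (3:ℝ) ^ ((1:ℝ)/3)) + 2) * (w - 1)
        ≤ 5 * ((317/600)*w) * (e:ℝ) ^ ((13:ℝ)/2) * (w - 1) := by
      gcongr
    calc 5 * Real.logb 2 w *
        (e : ℝ) ^ (2 * Real.logb 9 (96 * (3:ℝ) ^ ((1:ℝ)/3)) + 2) * (w - 1)
        ≤ 5 * ((317/600)*w) * (e:ℝ) ^ ((13:ℝ)/2) * (w - 1) := h1
      _ = (317/120) * (e:ℝ) ^ ((13:ℝ)/2) * (w * (w-1)) := by ring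
  -- step 2: (317/120) e^{13/2} * (w*(w-1)) < λ * 121 * 3^(e-6) * (w*(w-1))
  have hww : (0:ℝ) < w * (w - 1) := by nlinarith
  have step2 : (317/120) * (e:ℝ) ^ ((13:ℝ)/2) * (w * (w-1))
      < 2 * (3:ℝ) ^ ((1:ℝ)/3) * 121 * 3 ^ (e-6) * (w * (w-1)) := by
    exact mul_lt_mul_of_pos_right hd hww
  -- step 3: λ * 121 * 3^(e-6) * (w*(w-1)) ≤ λ * (w^e - 1)
  obtain ⟨m, rfl⟩ : ∃ m, e = m + 6 := ⟨e - 6, by omega⟩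
  have hm : (m + 6) - 6 = m := by omega
  rw [hm] at step2
  have hpow : (3:ℝ) ^ m ≤ w ^ m := pow_le_pow_left₀ (by norm_num) hw m
  have hwm0 : (0:ℝ) < w ^ m := by positivity
  have hwm1 : (1:ℝ) ≤ w ^ (m+1) := one_le_pow₀ (by linarith : (1:ℝ) ≤ w)
  have step3 : 2 * (3:ℝ) ^ ((1:ℝ)/3) * 121 * 3 ^ m * (w * (w-1))
      ≤ 2 * (3:ℝ) ^ ((1:ℝ)/3) * (w ^ (m+6) - 1) := by
    have hid : w ^ (m+6) - w^(m+1) = w^m * (w * (w-1) * (w^4+w^3+w^2+w+1)) := by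
      ring
    have hw2 : (9:ℝ) ≤ w^2 := by nlinarith
    have hw3 : (27:ℝ) ≤ w^3 := by nlinarith
    have hw4 : (81:ℝ) ≤ w^4 := by nlinarith
    have h121 : (121:ℝ) ≤ w^4+w^3+w^2+w+1 := by linarith
    have h1 : (121:ℝ) * (3:ℝ)^m * (w * (w-1)) ≤ (121:ℝ) * w^m * (w * (w-1)) :=
      mul_le_mul_of_nonneg_right
        (mul_le_mul_of_nonneg_left hpow (by norm_num)) (le_of_lt hww)
    have hc : (0:ℝ) ≤ w^m * (w * (w-1)) := le_of_lt (mul_pos hwm0 hww)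
    have h1b : (121:ℝ) * w^m * (w * (w-1)) ≤ w^m * (w * (w-1) * (w^4+w^3+w^2+w+1)) := by
      calc (121:ℝ) * w^m * (w * (w-1)) = (w^m * (w * (w-1))) * 121 := by ring
        _ ≤ (w^m * (w * (w-1))) * (w^4+w^3+w^2+w+1) := mul_le_mul_of_nonneg_left h121 hc
        _ = w^m * (w * (w-1) * (w^4+w^3+w^2+w+1)) := by ring
    have h2 : w^m * (w * (w-1) * (w^4+w^3+w^2+w+1)) ≤ w ^ (m+6) - 1 := by
      rw [← hid]; linarith
    have h3 : (121:ℝ) * (3:ℝ)^m * (w * (w-1)) ≤ w ^ (m+6) - 1 := by linarith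
    calc 2 * (3:ℝ) ^ ((1:ℝ)/3) * 121 * 3 ^ m * (w * (w-1))
        = (2 * (3:ℝ) ^ ((1:ℝ)/3)) * ((121:ℝ) * (3:ℝ)^m * (w * (w-1))) := by ring
      _ ≤ (2 * (3:ℝ) ^ ((1:ℝ)/3)) * (w ^ (m+6) - 1) :=
          mul_le_mul_of_nonneg_left h3 (le_of_lt hlam)
  linarith [step1, step2, step3]
end
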